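/- Let $\mathfrak{T}$ be an abelian group with norm-like function $|\cdot|$, $\xi : \mathfrak{T} \to \mathbb{R}$ additive with $|\xi(n)| \le |n|$ and the Diophantine condition $|\xi(n)| \ge a_0 |n|^{-b_0}$ for all $n \ne 0$ (constants $0 < a_0 < 1$, $b_0 > \nu$). Set $k_n = -\xi(n)/2$ for $n \ne 0$. Suppose $R^{(s)}$ is an increasing sequence of scales with $\log R^{(u)} = \beta_1 (\log R^{(u-1)})^2$, $\beta_1 = (32 b_0)^{-1}$, and $\log R^{(1)}$ sufficiently large so that $a_0 (48 R^{(u)})^{-b_0} > (R^{(u)})^{-2b_0}$ for all $u$. Let $\delta^{(u)}_0 = \exp(-(\log R^{(u)})^2)$. Suppose $k \in \mathbb{R}$ and $m_1 \ne 0$ satisfy $|k - k_{m_1}| < (\delta^{(s_1)}_0)^{3/4}$ where $12 R^{(s_1 - 1)} < |m_1| \le 12 R^{(s_1)}$. Then $|\xi(m_1)| > (\delta^{(s_1-1)}_0)^{1/16}$, $|k| > (\delta^{(s_1-1)}_0)^{1/16}/2$, and $\operatorname{sgn}(k) = -\operatorname{sgn}(\xi(m_1))$. -/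

import Mathlib

set_option maxHeartbeats 1000000 in
/-- Lemma on resonances, parts (1)–(2): if `k` is resonant with `m₁`
(`|k - k_{m₁}| < (δ^{(s₁)})^{3/4}` with `12 R^{(s₁-1)} < |m₁| ≤ 12 R^{(s₁)}`), then
`|ξ(m₁)| > (δ^{(s₁-1)})^{1/16}`, `|k| > (δ^{(s₁-1)})^{1/16}/2`, and `k` and `ξ(m₁)` have
opposite signs. -/
theorem resonance_structure {T : Type*} [AddCommGroup T] (nrm : T → ℝ)
    (hpos : ∀ m : T, 0 ≤ nrm m) (hzero : ∀ m : T, nrm m = 0 ↔ m = 0)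
    (htri : ∀ m n : T, nrm (m + n) ≤ nrm m + nrm n)
    (ξ : T → ℝ) (hadd : ∀ a b : T, ξ (a + b) = ξ a + ξ b)
    (hξbound : ∀ n : T, |ξ n| ≤ nrm n)
    (a0 b0 ν : ℝ) (ha0 : 0 < a0) (ha1 : a0 < 1) (hν : 1 < ν) (hb0 : ν < b0)
    (hdioph : ∀ n : T, n ≠ 0 → a0 * nrm n ^ (-b0) ≤ |ξ n|)
    (β1 : ℝ) (hβ1 : β1 = (32 * b0)⁻¹)
    (R δ' : ℕ → ℝ) (hR0 : R 0 = 0)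
    (hRmono : ∀ u : ℕ, 1 ≤ u → R u < R (u + 1))
    (hRrec : ∀ u : ℕ, 2 ≤ u → Real.log (R u) = β1 * (Real.log (R (u - 1))) ^ 2)
    (hR1a : 100 * a0⁻¹ ≤ R 1)
    (hR1big : 2 ^ 34 * β1⁻¹ ≤ Real.log (R 1))
    (hRbig : ∀ u : ℕ, 1 ≤ u → (R u) ^ (-(2 * b0)) < a0 * (48 * R u) ^ (-b0))
    (hδ : ∀ u : ℕ, 1 ≤ u → δ' u = Real.exp (-(Real.log (R u)) ^ 2))
    (hδ0 : δ' 0 = (R 1) ^ (-β1⁻¹))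
    (k : ℝ) (m1 : T) (hm1 : m1 ≠ 0) (s1 : ℕ) (hs1 : 1 ≤ s1)
    (hm1lo : 12 * R (s1 - 1) < nrm m1) (hm1hi : nrm m1 ≤ 12 * R s1)
    (hres : |k - (-(ξ m1) / 2)| < (δ' s1) ^ ((3 : ℝ) / 4)) :
    (δ' (s1 - 1)) ^ ((1 : ℝ) / 16) < |ξ m1| ∧
    (δ' (s1 - 1)) ^ ((1 : ℝ) / 16) / 2 < |k| ∧
    Real.sign k = -Real.sign (ξ m1) := by
  have hb0pos : (1 : ℝ) < b0 := hν.trans hb0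
  have hb0' : (0 : ℝ) < b0 := by linarith
  have hβ1inv : β1⁻¹ = 32 * b0 := by rw [hβ1, inv_inv]
  have hR1pos : 0 < R 1 := by
    have : (0 : ℝ) < 100 * a0⁻¹ := by positivity
    linarith
  have hRle : ∀ u, 1 ≤ u → R 1 ≤ R u := by
    intro u hu
    induction u with
    | zero => omega
    | succ n ih =>
      rcases eq_or_lt_of_le hu with h | h
      · rw [← h]
      · have hn : 1 ≤ n := by omega
        exact (ih hn).trans (hRmono n hn).le
  have hRs1pos : 0 < R s1 := lt_of_lt_of_le hR1pos (hRle s1 hs1)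
  set L := Real.log (R s1) with hL
  have hLbig : 2 ^ 34 * (32 * b0) ≤ L := by
    have h1 : Real.log (R 1) ≤ L := Real.log_le_log hR1pos (hRle s1 hs1)
    rw [hβ1inv] at hR1big
    linarith
  have hLpos : 0 < L := by nlinarith
  set D := Real.exp (-(2 * b0) * L) with hDdef
  have hDpos : 0 < D := Real.exp_pos _
  -- key identity: the threshold equals `(R s1)^(-2 b0)` written as an exponential
  have hD : (δ' (s1 - 1)) ^ ((1 : ℝ) / 16) = D := by
    rcases eq_or_lt_of_le hs1 with h1 | h2
    · -- s1 = 1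
      have hs0 : s1 - 1 = 0 := by omega
      have hRs1 : R s1 = R 1 := by rw [← h1]
      rw [hs0, hδ0, ← Real.rpow_mul hR1pos.le, Real.rpow_def_of_pos hR1pos,
        hDdef, hL, hRs1, hβ1inv]
      congr 1
      ring
    · -- s1 ≥ 2
      have hs2 : 2 ≤ s1 := h2
      have hs1m : 1 ≤ s1 - 1 := by omega
      have hrec := hRrec s1 hs2
      rw [hδ (s1 - 1) hs1m, ← Real.exp_mul, hDdef]
      congr 1
      have hsq : (Real.log (R (s1 - 1))) ^ 2 = 32 * b0 * L := by
        rw [hL, hrec, hβ1]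
        field_simp
      rw [hsq]; ring
  have hDval : D = (R s1) ^ (-(2 * b0)) := by
    rw [Real.rpow_def_of_pos hRs1pos, hDdef, hL]; ring_nf
  -- lower bound |ξ m1| > 4 D
  have hnm1pos : 0 < nrm m1 := (hpos m1).lt_of_ne' (fun h => hm1 ((hzero m1).mp h))
  have h12 : (0 : ℝ) < 12 * R s1 := by linarith
  have hmono : (12 * R s1) ^ (-b0) ≤ nrm m1 ^ (-b0) :=
    Real.rpow_le_rpow_of_nonpos hnm1pos hm1hi (by linarith)
  have h48 : (48 * R s1 : ℝ) ^ (-b0) = (4 : ℝ) ^ (-b0) * (12 * R s1) ^ (-b0) := by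
    have : (48 * R s1 : ℝ) = 4 * (12 * R s1) := by ring
    rw [this, Real.mul_rpow (by norm_num) h12.le]
  have h4b : (4 : ℝ) ≤ (4 : ℝ) ^ b0 := by
    calc (4 : ℝ) = (4 : ℝ) ^ (1 : ℝ) := (Real.rpow_one 4).symm
    _ ≤ (4 : ℝ) ^ b0 :=
      Real.rpow_le_rpow_of_exponent_le (by norm_num) hb0pos.le
  have h4inv : (4 : ℝ) ^ b0 * (4 : ℝ) ^ (-b0) = 1 := by
    rw [← Real.rpow_add (by norm_num)]; simp
  have hxlb : 4 * D < |ξ m1| := by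
    have hkey : (4 : ℝ) ^ b0 * D < (4 : ℝ) ^ b0 * (a0 * (48 * R s1) ^ (-b0)) := by
      have := hRbig s1 hs1
      rw [← hDval] at this
      exact (mul_lt_mul_iff_right₀ (by positivity)).mpr this
    have heq : (4 : ℝ) ^ b0 * (a0 * (48 * R s1) ^ (-b0)) = a0 * (12 * R s1) ^ (-b0) := by
      rw [h48]
      calc (4:ℝ) ^ b0 * (a0 * ((4:ℝ) ^ (-b0) * (12 * R s1) ^ (-b0)))
          = a0 * ((4:ℝ) ^ b0 * (4:ℝ) ^ (-b0)) * (12 * R s1) ^ (-b0) := by ring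
        _ = a0 * (12 * R s1) ^ (-b0) := by rw [h4inv]; ring
    have h1 : a0 * (12 * R s1) ^ (-b0) ≤ a0 * nrm m1 ^ (-b0) :=
      (mul_le_mul_iff_right₀ ha0).mpr hmono
    have h2 := hdioph m1 hm1
    nlinarith [hkey, heq, h1, h2, hDpos]
  -- the resonance window is smaller than D
  have hδ34 : (δ' s1) ^ ((3 : ℝ) / 4) < D := by
    rw [hδ s1 hs1, ← Real.exp_mul, hDdef]
    apply Real.exp_lt_exp.mpr
    rw [hL]
    nlinarith [hLbig, hLpos, hb0pos]
  have hres' : |k - (-(ξ m1) / 2)| < D := hres.trans hδ34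
  rw [hD]
  have habs := abs_lt.mp hres'
  refine ⟨by linarith, ?_, ?_⟩
  · -- |k| > D / 2
    have h1 : |(-(ξ m1) / 2)| - |k| ≤ |(-(ξ m1) / 2) - k| := abs_sub_abs_le_abs_sub _ _
    rw [abs_sub_comm] at h1
    have h2 : |(-(ξ m1) / 2)| = |ξ m1| / 2 := by
      rw [abs_div, abs_neg]; norm_num
    linarith [h1, h2 ▸ h1, hres', hxlb, hDpos]
  · -- opposite signs
    rcases lt_trichotomy (ξ m1) 0 with hneg | h0 | hposn
    · have hxi : |ξ m1| = -ξ m1 := abs_of_neg hneg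
      have hk : 0 < k := by
        have h3 : k - (-(ξ m1) / 2) > -D := habs.1
        linarith [hxi ▸ hxlb]
      rw [Real.sign_of_pos hk, Real.sign_of_neg hneg]; norm_num
    · exfalso; rw [h0] at hxlb; simp at hxlb; linarith
    · have hxi : |ξ m1| = ξ m1 := abs_of_pos hposn
      have hk : k < 0 := by
        have h3 : k - (-(ξ m1) / 2) < D := habs.2
        linarith [hxi ▸ hxlb]
      rw [Real.sign_of_neg hk, Real.sign_of_pos hposn]
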